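/- Let a_0, a_1, a_2, ... be i.i.d. standard complex Gaussian random variables, i.e. with distribution on ℂ having density z ↦ π^{-1} e^{-|z|²} with respect to Lebesgue measure on ℂ. Then for every integer n ≥ 1, the largest root modulus x_n^(n) of the random polynomial P_n(z) = ∑_{k=0}^n a_k z^k satisfies 𝔼[(x_n^(n))²] = ∞. -/

import Mathlib

open MeasureTheory ProbabilityTheory Polynomial Filter
open scoped ENNReal NNReal

/-- The random Kac polynomial `P_n(z) = ∑_{k=0}^n a_k z^k`. -/
noncomputable def kacPoly {Ω : Type*} (a : ℕ → Ω → ℂ) (n : ℕ) (ω : Ω) : Polynomial ℂ :=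
  ∑ k ∈ Finset.range (n + 1), Polynomial.C (a k ω) * Polynomial.X ^ k

/-- The smallest modulus of a root of a complex polynomial. -/
noncomputable def minRootMod (p : Polynomial ℂ) : ℝ :=
  sInf ((fun z : ℂ => ‖z‖) '' {z : ℂ | z ∈ p.roots})

/-- The largest modulus of a root of a complex polynomial. -/
noncomputable def maxRootMod (p : Polynomial ℂ) : ℝ :=
  sSup ((fun z : ℂ => ‖z‖) '' {z : ℂ | z ∈ p.roots})

/-- The standard complex Gaussian distribution: the measure on `ℂ` with density
`z ↦ π⁻¹ e^{-|z|²}` with respect to the Lebesgue measure on `ℂ`. -/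
noncomputable def stdComplexGaussian : Measure ℂ :=
  (volume : Measure ℂ).withDensity
    fun z => ENNReal.ofReal (Real.exp (-(‖z‖ ^ 2)) / Real.pi)

lemma kacPoly_coeff {Ω : Type*} (a : ℕ → Ω → ℂ) (n : ℕ) (ω : Ω) (m : ℕ) :
    (kacPoly a n ω).coeff m = if m ≤ n then a m ω else 0 := by
  simp [kacPoly, Polynomial.finset_sum_coeff, Polynomial.coeff_C_mul, Polynomial.coeff_X_pow,
    Nat.lt_succ_iff, eq_comm]

lemma kacPoly_natDegree {Ω : Type*} {a : ℕ → Ω → ℂ} {n : ℕ} {ω : Ω} (h : a n ω ≠ 0) :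
    (kacPoly a n ω).natDegree = n := by
  apply le_antisymm
  · rw [Polynomial.natDegree_le_iff_coeff_eq_zero]
    intro m hm
    rw [kacPoly_coeff, if_neg (by omega)]
  · exact Polynomial.le_natDegree_of_ne_zero (by rw [kacPoly_coeff, if_pos le_rfl]; exact h)

lemma maxRootMod_nonneg' {p : Polynomial ℂ} (h : p.roots ≠ 0) : 0 ≤ maxRootMod p := by
  obtain ⟨z, hz⟩ := Multiset.exists_mem_of_ne_zero h
  have hfin : ((fun z : ℂ => ‖z‖) '' {z : ℂ | z ∈ p.roots}).Finite := by
    apply Set.Finite.image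
    have : {z : ℂ | z ∈ p.roots} = ↑p.roots.toFinset := by ext w; simp
    rw [this]; exact p.roots.toFinset.finite_toSet
  exact le_trans (norm_nonneg z) (le_csSup hfin.bddAbove ⟨z, hz, rfl⟩)

lemma abs_coeff_le {p : Polynomial ℂ} {n : ℕ} (hn : 1 ≤ n) (hdeg : p.natDegree = n) :
    ‖p.coeff (n - 1)‖ ≤ n * ‖p.leadingCoeff‖ * maxRootMod p := by
  have hp : p ≠ 0 := by
    intro h; rw [h, Polynomial.natDegree_zero] at hdeg; omega
  have hc : p.leadingCoeff ≠ 0 := Polynomial.leadingCoeff_ne_zero.mpr hp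
  set q := Polynomial.C p.leadingCoeff⁻¹ * p with hq_def
  have hmon : q.Monic := by
    rw [hq_def, mul_comm]; exact Polynomial.monic_mul_leadingCoeff_inv hp
  have hqroots : q.roots = p.roots := Polynomial.roots_C_mul p (inv_ne_zero hc)
  have hqdeg : q.natDegree = n := by
    rw [hq_def, Polynomial.natDegree_C_mul (inv_ne_zero hc), hdeg]
  have hsplit : q.Splits := IsAlgClosed.splits q
  have hsum : q.nextCoeff = -q.roots.sum :=
    hsplit.nextCoeff_eq_neg_sum_roots_of_monic hmon
  have hnext : q.nextCoeff = q.coeff (n - 1) := by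
    rw [Polynomial.nextCoeff_of_natDegree_pos (by omega), hqdeg]
  have hcard : Multiset.card p.roots = n := by
    rw [← hdeg]
    exact Polynomial.splits_iff_card_roots.mp (IsAlgClosed.splits p)
  have hfin : ((fun z : ℂ => ‖z‖) '' {z : ℂ | z ∈ p.roots}).Finite := by
    apply Set.Finite.image
    have : {z : ℂ | z ∈ p.roots} = ↑p.roots.toFinset := by ext w; simp
    rw [this]; exact p.roots.toFinset.finite_toSet
  have hle : ∀ z ∈ p.roots, ‖z‖ ≤ maxRootMod p := fun z hz =>
    le_csSup hfin.bddAbove ⟨z, hz, rfl⟩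
  have habs : ‖p.roots.sum‖ ≤ n * maxRootMod p := by
    calc ‖p.roots.sum‖ ≤ (p.roots.map (fun z : ℂ => ‖z‖)).sum := by
          simpa using norm_multiset_sum_le p.roots
      _ ≤ Multiset.card (p.roots.map (fun z : ℂ => ‖z‖)) • maxRootMod p := by
          apply Multiset.sum_le_card_nsmul
          intro x hx
          obtain ⟨z, hz, rfl⟩ := Multiset.mem_map.mp hx
          exact hle z hz
      _ = n * maxRootMod p := by rw [Multiset.card_map, hcard, nsmul_eq_mul]
  have hq_coeff : q.coeff (n - 1) = p.leadingCoeff⁻¹ * p.coeff (n - 1) := by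
    rw [hq_def, Polynomial.coeff_C_mul]
  have heq : ‖p.coeff (n - 1)‖ =
      ‖p.leadingCoeff‖ * ‖q.coeff (n - 1)‖ := by
    rw [hq_coeff, norm_mul, norm_inv, ← mul_assoc,
      mul_inv_cancel₀ (norm_ne_zero_iff.mpr hc), one_mul]
  have h2 : ‖q.coeff (n - 1)‖ ≤ n * maxRootMod p := by
    rw [← hnext, hsum, norm_neg, hqroots]
    exact habs
  calc ‖p.coeff (n - 1)‖
      = ‖p.leadingCoeff‖ * ‖q.coeff (n - 1)‖ := heq
    _ ≤ ‖p.leadingCoeff‖ * (n * maxRootMod p) :=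
        mul_le_mul_of_nonneg_left h2 (norm_nonneg _)
    _ = n * ‖p.leadingCoeff‖ * maxRootMod p := by ring

lemma lint_ball_top :
    ∫⁻ z in Metric.ball (0:ℂ) 1, (ENNReal.ofReal (‖z‖) ^ 2)⁻¹ ∂volume = ⊤ := by
  set ψ : ℂ → ℝ≥0∞ := fun z => (ENNReal.ofReal (‖z‖) ^ 2)⁻¹ with hψ
  have hψm : Measurable ψ :=
    ((ENNReal.measurable_ofReal.comp continuous_norm.measurable).pow_const 2).inv
  set r : ℕ → ℝ := fun k => (2:ℝ)⁻¹ ^ k with hr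
  have hrpos : ∀ k, (0:ℝ) < r k := fun k => by positivity
  set A : ℕ → Set ℂ := fun k => Metric.ball 0 (r k) \ Metric.ball 0 (r (k+1)) with hA
  have hAm : ∀ k, MeasurableSet (A k) := fun k =>
    measurableSet_ball.diff measurableSet_ball
  have hranti : ∀ {k l : ℕ}, k ≤ l → r l ≤ r k := fun {k l} h =>
    pow_le_pow_of_le_one (by norm_num) (by norm_num) h
  have hsub : ∀ k, A k ⊆ Metric.ball (0:ℂ) 1 := fun k =>
    Set.diff_subset.trans (Metric.ball_subset_ball (by simpa [hr] using hranti (Nat.zero_le k)))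
  have hdisj : Pairwise (Function.onFun Disjoint A) := by
    have key : ∀ {k l : ℕ}, k < l → Disjoint (A k) (A l) := by
      intro k l hkl
      have h1 : A l ⊆ Metric.ball 0 (r (k+1)) :=
        Set.diff_subset.trans (Metric.ball_subset_ball (hranti hkl))
      have h2 : A k ⊆ (Metric.ball (0:ℂ) (r (k+1)))ᶜ := fun z hz => hz.2
      exact disjoint_compl_left.mono h2 h1
    intro k l hkl
    rcases hkl.lt_or_gt with h | h
    · exact key h
    · exact (key h).symm
  have hofReal : ∀ k, ENNReal.ofReal (r k) = (2:ℝ≥0∞)⁻¹ ^ k := by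
    intro k
    rw [hr]
    rw [ENNReal.ofReal_pow (by norm_num), ENNReal.ofReal_inv_of_pos (by norm_num),
      ENNReal.ofReal_ofNat]
  have hvol : ∀ k, volume (A k) =
      ((2:ℝ≥0∞)⁻¹ ^ k) ^ 2 * NNReal.pi - ((2:ℝ≥0∞)⁻¹ ^ (k+1)) ^ 2 * NNReal.pi := by
    intro k
    rw [hA]
    rw [measure_diff (Metric.ball_subset_ball (hranti (Nat.le_succ k)))
      measurableSet_ball.nullMeasurableSet measure_ball_lt_top.ne,
      Complex.volume_ball, Complex.volume_ball, hofReal, hofReal]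
  have hbound : ∀ k, (((2:ℝ≥0∞)⁻¹ ^ k) ^ 2)⁻¹ * volume (A k) ≤ ∫⁻ z in A k, ψ z ∂volume := by
    intro k
    have : ∀ z ∈ A k, (((2:ℝ≥0∞)⁻¹ ^ k) ^ 2)⁻¹ ≤ ψ z := by
      intro z hz
      have hzlt : ‖z‖ ≤ r k := by
        have := hz.1
        rw [Metric.mem_ball, dist_zero_right] at this
        exact this.le
      have : ENNReal.ofReal (‖z‖) ^ 2 ≤ ((2:ℝ≥0∞)⁻¹ ^ k) ^ 2 := by
        rw [← hofReal]
        exact pow_le_pow_left' (ENNReal.ofReal_le_ofReal hzlt) 2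
      exact ENNReal.inv_le_inv.mpr this
    calc (((2:ℝ≥0∞)⁻¹ ^ k) ^ 2)⁻¹ * volume (A k)
        = ∫⁻ _ in A k, (((2:ℝ≥0∞)⁻¹ ^ k) ^ 2)⁻¹ ∂volume := (setLIntegral_const _ _).symm
      _ ≤ ∫⁻ z in A k, ψ z ∂volume := setLIntegral_mono hψm this
  set c : ℝ≥0∞ := (NNReal.pi : ℝ≥0∞) - (2:ℝ≥0∞)⁻¹ ^ 2 * NNReal.pi with hc
  have hcval : ∀ k, (((2:ℝ≥0∞)⁻¹ ^ k) ^ 2)⁻¹ * volume (A k) = c := by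
    intro k
    rw [hvol k]
    have h1 : ((2:ℝ≥0∞)⁻¹ ^ (k+1)) ^ 2 = ((2:ℝ≥0∞)⁻¹ ^ k) ^ 2 * (2:ℝ≥0∞)⁻¹ ^ 2 := by ring
    rw [h1]
    have hne0 : ((2:ℝ≥0∞)⁻¹ ^ k) ^ 2 ≠ 0 :=
      pow_ne_zero 2 (pow_ne_zero k (ENNReal.inv_ne_zero.mpr (by simp)))
    have hnetop : ((2:ℝ≥0∞)⁻¹ ^ k) ^ 2 ≠ ⊤ :=
      ENNReal.pow_ne_top (ENNReal.pow_ne_top (ENNReal.inv_ne_top.mpr (by simp)))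
    rw [mul_assoc, ← ENNReal.mul_sub (fun _ _ => hnetop),
      ← mul_assoc, ENNReal.inv_mul_cancel hne0 hnetop, one_mul, hc]
  have hcne : c ≠ 0 := by
    rw [hc, ← pos_iff_ne_zero, tsub_pos_iff_lt]
    have hπ : (0:ℝ≥0∞) < NNReal.pi := by
      simp [pos_iff_ne_zero, NNReal.pi_ne_zero]
    calc (2:ℝ≥0∞)⁻¹ ^ 2 * NNReal.pi < 1 * NNReal.pi := by
          rw [ENNReal.mul_lt_mul_iff_left hπ.ne' ENNReal.coe_ne_top]
          calc (2:ℝ≥0∞)⁻¹ ^ 2 ≤ (2:ℝ≥0∞)⁻¹ := by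
                rw [pow_two]
                exact mul_le_of_le_one_left (zero_le (a := (2:ℝ≥0∞)⁻¹)) (ENNReal.inv_le_one.mpr (by norm_num))
            _ < 1 := ENNReal.inv_lt_one.mpr (by norm_num)
      _ = NNReal.pi := one_mul _
  have : (⊤:ℝ≥0∞) ≤ ∫⁻ z in Metric.ball (0:ℂ) 1, ψ z ∂volume := by
    calc (⊤:ℝ≥0∞) = ∑' _ : ℕ, c := (ENNReal.tsum_const_eq_top_of_ne_zero hcne).symm
      _ ≤ ∑' k, ∫⁻ z in A k, ψ z ∂volume := by
          apply ENNReal.tsum_le_tsum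
          intro k
          rw [← hcval k]
          exact hbound k
      _ = ∫⁻ z in ⋃ k, A k, ψ z ∂volume := (lintegral_iUnion hAm hdisj ψ).symm
      _ ≤ ∫⁻ z in Metric.ball (0:ℂ) 1, ψ z ∂volume :=
          lintegral_mono_set (Set.iUnion_subset hsub)
  exact top_le_iff.mp this

/-- For i.i.d. standard complex Gaussian coefficients, the largest root
modulus of the Kac polynomial `P_n` has infinite second moment for every `n ≥ 1`. -/
theorem maxRootMod_infinite_second_moment_complex_gaussian
    {Ω : Type*} [MeasurableSpace Ω] (μ : Measure Ω) [IsProbabilityMeasure μ]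
    (a : ℕ → Ω → ℂ) (hmeas : ∀ k, Measurable (a k))
    (hindep : iIndepFun a μ)
    (hgauss : ∀ k, μ.map (a k) = stdComplexGaussian) :
    ∀ n : ℕ, 1 ≤ n →
      ∫⁻ ω, ENNReal.ofReal (maxRootMod (kacPoly a n ω) ^ 2) ∂μ = ⊤ := by
  intro n hn
  set dens : ℂ → ℝ≥0∞ := fun z => ENNReal.ofReal (Real.exp (-(‖z‖ ^ 2)) / Real.pi)
    with hdens
  have hdensm : Measurable dens :=
    ENNReal.measurable_ofReal.comp
      (((Real.continuous_exp.comp ((continuous_norm.pow 2).neg)).div_const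
        Real.pi).measurable)
  set φ : ℂ → ℝ≥0∞ := fun z => ENNReal.ofReal (‖z‖) ^ 2 with hφ
  set ψ : ℂ → ℝ≥0∞ := fun z => (ENNReal.ofReal (‖z‖) ^ 2)⁻¹ with hψ
  have hφm : Measurable φ :=
    (ENNReal.measurable_ofReal.comp continuous_norm.measurable).pow_const 2
  have hψm : Measurable ψ := hφm.inv
  -- the coefficients are a.e. nonzero
  have hzero : ∀ k, ∀ᵐ ω ∂μ, a k ω ≠ 0 := by
    intro k
    have h0 : μ (a k ⁻¹' {0}) = 0 := by
      have hmap := Measure.map_apply (μ := μ) (hmeas k) (measurableSet_singleton (0:ℂ))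
      rw [hgauss k] at hmap
      rw [← hmap, stdComplexGaussian, withDensity_apply _ (measurableSet_singleton 0),
        setLIntegral_measure_zero _ _ (measure_singleton 0)]
    rw [ae_iff]
    simpa [Set.preimage, not_not] using h0
  -- pointwise a.e. bound
  have hptwise : ∀ᵐ ω ∂μ, ψ (a n ω) * φ (a (n-1) ω) ≤
      (n:ℝ≥0∞)^2 * ENNReal.ofReal (maxRootMod (kacPoly a n ω) ^ 2) := by
    filter_upwards [hzero n] with ω hω
    set p := kacPoly a n ω with hp_def
    have hdeg : p.natDegree = n := kacPoly_natDegree hω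
    have hlead : p.leadingCoeff = a n ω := by
      rw [Polynomial.leadingCoeff, hdeg, hp_def, kacPoly_coeff, if_pos le_rfl]
    have hco : p.coeff (n-1) = a (n-1) ω := by
      rw [hp_def, kacPoly_coeff, if_pos (Nat.sub_le n 1)]
    have hkey := abs_coeff_le hn hdeg
    rw [hlead, hco] at hkey
    have hroots_ne : p.roots ≠ 0 := by
      intro h
      have := Polynomial.splits_iff_card_roots.mp (IsAlgClosed.splits p)
      rw [h, hdeg] at this
      simp at this
      omega
    have hM0 : 0 ≤ maxRootMod p := maxRootMod_nonneg' hroots_ne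
    set x := ENNReal.ofReal (‖a n ω‖) with hx
    set y := ENNReal.ofReal (‖a (n-1) ω‖) with hy
    set m := ENNReal.ofReal (maxRootMod p) with hm
    have hx0 : x ≠ 0 := (ENNReal.ofReal_pos.mpr (norm_pos_iff.mpr hω)).ne'
    have hxtop : x ≠ ⊤ := ENNReal.ofReal_ne_top
    have hyxm : y ≤ (n:ℝ≥0∞) * x * m := by
      calc y ≤ ENNReal.ofReal (n * ‖a n ω‖ * maxRootMod p) :=
            ENNReal.ofReal_le_ofReal hkey
        _ = (n:ℝ≥0∞) * x * m := by
            rw [ENNReal.ofReal_mul (by positivity), ENNReal.ofReal_mul (by positivity),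
              ENNReal.ofReal_natCast]
    have hM2 : ENNReal.ofReal (maxRootMod p ^ 2) = m ^ 2 := ENNReal.ofReal_pow hM0 2
    show (x ^ 2)⁻¹ * y ^ 2 ≤ (n:ℝ≥0∞)^2 * ENNReal.ofReal (maxRootMod p ^ 2)
    rw [hM2]
    have hy2 : y^2 ≤ (n:ℝ≥0∞)^2 * m^2 * x^2 := by
      calc y^2 ≤ ((n:ℝ≥0∞) * x * m)^2 := by
            rw [sq, sq]; exact mul_le_mul' hyxm hyxm
        _ = (n:ℝ≥0∞)^2 * m^2 * x^2 := by ring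
    calc (x^2)⁻¹ * y^2 ≤ (x^2)⁻¹ * ((n:ℝ≥0∞)^2 * m^2 * x^2) := mul_le_mul_right hy2 _
      _ = (n:ℝ≥0∞)^2 * m^2 * ((x^2)⁻¹ * x^2) := by ring
      _ = (n:ℝ≥0∞)^2 * m^2 := by
          rw [ENNReal.inv_mul_cancel (pow_ne_zero 2 hx0) (ENNReal.pow_ne_top hxtop), mul_one]
  -- the lower-bound integral is infinite
  have hmain : ∫⁻ ω, ψ (a n ω) * φ (a (n-1) ω) ∂μ = ⊤ := by
    have hind : IndepFun (fun ω => ψ (a n ω)) (fun ω => φ (a (n-1) ω)) μ :=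
      (hindep.indepFun (show n ≠ n - 1 by omega)).comp hψm hφm
    have hprod := lintegral_mul_eq_lintegral_mul_lintegral_of_indepFun
      (hψm.comp (hmeas n)) (hφm.comp (hmeas (n-1))) hind
    have h1 : ∫⁻ ω, ψ (a n ω) ∂μ = ⊤ := by
      rw [← lintegral_map hψm (hmeas n), hgauss n, stdComplexGaussian,
        lintegral_withDensity_eq_lintegral_mul _ hdensm hψm]
      rw [← top_le_iff]
      have hball : ∫⁻ z in Metric.ball (0:ℂ) 1, (dens * ψ) z ∂volume = ⊤ := by
        rw [← top_le_iff]
        have hc0 : ∀ z ∈ Metric.ball (0:ℂ) 1,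
            ENNReal.ofReal (Real.exp (-1) / Real.pi) * ψ z ≤ (dens * ψ) z := by
          intro z hz
          have hz1 : ‖z‖ < 1 := by
            rw [Metric.mem_ball, dist_zero_right] at hz
            exact hz
          have hd : ENNReal.ofReal (Real.exp (-1) / Real.pi) ≤ dens z := by
            apply ENNReal.ofReal_le_ofReal
            gcongr
            nlinarith [norm_nonneg z]
          simp only [Pi.mul_apply]
          exact mul_le_mul' hd le_rfl
        have hballψ : ∫⁻ z in Metric.ball (0:ℂ) 1, ψ z ∂volume = ⊤ := by
          simp only [hψ]
          exact lint_ball_top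
        calc (⊤:ℝ≥0∞) = ENNReal.ofReal (Real.exp (-1) / Real.pi)
              * ∫⁻ z in Metric.ball (0:ℂ) 1, ψ z ∂volume := by
              rw [hballψ, ENNReal.mul_top (ENNReal.ofReal_pos.mpr (by positivity)).ne']
          _ = ∫⁻ z in Metric.ball (0:ℂ) 1,
                ENNReal.ofReal (Real.exp (-1) / Real.pi) * ψ z ∂volume :=
              (lintegral_const_mul' _ _ ENNReal.ofReal_ne_top).symm
          _ ≤ ∫⁻ z in Metric.ball (0:ℂ) 1, (dens * ψ) z ∂volume :=
              setLIntegral_mono (hdensm.mul hψm) hc0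
      calc (⊤:ℝ≥0∞) = ∫⁻ z in Metric.ball (0:ℂ) 1, (dens * ψ) z ∂volume := hball.symm
        _ ≤ ∫⁻ z, (dens * ψ) z ∂volume := setLIntegral_le_lintegral _ _
    have h2 : ∫⁻ ω, φ (a (n-1) ω) ∂μ ≠ 0 := by
      rw [← lintegral_map hφm (hmeas (n-1)), hgauss (n-1), stdComplexGaussian,
        lintegral_withDensity_eq_lintegral_mul _ hdensm hφm]
      rw [← pos_iff_ne_zero]
      simp only [Pi.mul_apply]
      refine (lintegral_pos_iff_support (hdensm.mul hφm)).mpr ?_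
      have hsub : Metric.ball (1:ℂ) 2⁻¹ ⊆ Function.support (dens * φ) := by
        intro z hz
        have hz0 : z ≠ 0 := by
          intro h
          rw [h, Metric.mem_ball, dist_zero_left, norm_one] at hz
          norm_num at hz
        have h1 : dens z ≠ 0 := by
          rw [hdens]
          simp only [ne_eq, ENNReal.ofReal_eq_zero, not_le]
          positivity
        have h2 : φ z ≠ 0 := by
          rw [hφ]
          simp only [ne_eq]
          exact pow_ne_zero 2 (ENNReal.ofReal_pos.mpr (norm_pos_iff.mpr hz0)).ne'
        simp only [Function.mem_support, Pi.mul_apply]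
        exact mul_ne_zero h1 h2
      calc (0:ℝ≥0∞) < volume (Metric.ball (1:ℂ) 2⁻¹) := by
            rw [Complex.volume_ball]
            apply ENNReal.mul_pos
            · exact pow_ne_zero 2 (ENNReal.ofReal_pos.mpr (by norm_num)).ne'
            · exact_mod_cast NNReal.pi_ne_zero
        _ ≤ volume (Function.support (dens * φ)) := measure_mono hsub
    simp only [Pi.mul_apply, Function.comp_apply] at hprod
    rw [hprod, h1]
    exact ENNReal.top_mul h2
  -- conclude
  have hle := lintegral_mono_ae hptwise
  rw [hmain, lintegral_const_mul' _ _ (ENNReal.pow_ne_top (ENNReal.natCast_ne_top n))] at hle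
  have := top_le_iff.mp hle
  rcases ENNReal.mul_eq_top.mp this with ⟨_, h⟩ | ⟨h, _⟩
  · exact h
  · exact absurd h (ENNReal.pow_ne_top (ENNReal.natCast_ne_top n))
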